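/- Let n ≥ 3 and let ψ₁,…,ψₙ be unit vectors in ℂ^d with Δ(ψ₁,…,ψₙ) ≠ 0. Then there exist a positive integer d′ and unit vectors φ₁,…,φₙ in ℂ^{d′} such that: (i) the Gram matrix G(φ₁,…,φₙ) is a circulant matrix; in particular ⟪φ₁,φ₂⟫ = ⟪φ₂,φ₃⟫ = ⋯ = ⟪φ_{n−1},φₙ⟫ = ⟪φₙ,φ₁⟫; and (ii) there exists a real number c with 0 < c ≤ 1 such that Δ(ψ₁,…,ψₙ) = c · Δ(φ₁,…,φₙ) (so the two Bargmann invariants have the same argument and |Δ(ψ₁,…,ψₙ)| ≤ |Δ(φ₁,…,φₙ)|). -/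

import Mathlib

open Finset
open Fin.NatCast

/-- Lifting a nonzero Bargmann invariant to one with a circulant Gram matrix:
given unit vectors `ψ₁, …, ψₙ` in `ℂ^d` with `Δ(ψ₁,…,ψₙ) ≠ 0`, there are unit vectors
`φ₁, …, φₙ` in some `ℂ^{d'}` whose Gram matrix is circulant (in particular all
consecutive inner products are equal) and a real `c` with `0 < c ≤ 1` such that
`Δ(ψ₁,…,ψₙ) = c · Δ(φ₁,…,φₙ)`. -/
theorem exists_circulant_gram_with_same_phase {n d : ℕ} (hn : 3 ≤ n)
    (ψ : Fin n → EuclideanSpace ℂ (Fin d)) (hψ : ∀ k, ‖ψ k‖ = 1)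
    (hΔ : (∏ k : Fin n, (inner ℂ (ψ k) (ψ (k + ⟨1, by omega⟩)) : ℂ)) ≠ 0) :
    ∃ d' : ℕ, 0 < d' ∧ ∃ φ : Fin n → EuclideanSpace ℂ (Fin d'),
      (∀ k, ‖φ k‖ = 1) ∧
      (∃ z : Fin n → ℂ, ∀ i j : Fin n, (inner ℂ (φ i) (φ j) : ℂ) = z (j - i)) ∧
      (∀ k : Fin n, (inner ℂ (φ k) (φ (k + ⟨1, by omega⟩)) : ℂ) =
        (inner ℂ (φ ⟨0, by omega⟩) (φ ⟨1, by omega⟩) : ℂ)) ∧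
      (∃ c : ℝ, 0 < c ∧ c ≤ 1 ∧
        (∏ k : Fin n, (inner ℂ (ψ k) (ψ (k + ⟨1, by omega⟩)) : ℂ)) =
          (c : ℂ) * ∏ k : Fin n, (inner ℂ (φ k) (φ (k + ⟨1, by omega⟩)) : ℂ)) := by
  haveI : NeZero n := ⟨by omega⟩
  have hn1 : 1 < n := by omega
  have h1 : (⟨1, by omega⟩ : Fin n) = 1 := by
    ext; simp [Fin.val_one, Nat.mod_eq_of_lt hn1]
  have h0 : (⟨0, by omega⟩ : Fin n) = 0 := by ext; simp
  rw [h1] at hΔ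
  simp only [h0, h1]
  have hd : 0 < d := by
    rcases Nat.eq_zero_or_pos d with h | h
    · exfalso
      have h2 := hψ 0
      subst h
      rw [EuclideanSpace.norm_eq] at h2
      simp at h2
    · exact h
  have hnR : (n : ℝ) ≠ 0 := by positivity
  have hak : ∀ k : Fin n, (inner ℂ (ψ k) (ψ (k + 1)) : ℂ) ≠ 0 := by
    intro k hk
    exact hΔ (Finset.prod_eq_zero (mem_univ k) hk)
  set a : Fin n → ℂ := fun k => (inner ℂ (ψ k) (ψ (k + 1)) : ℂ) with ha
  have hak' : ∀ k, a k ≠ 0 := hak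
  set r : Fin n → ℝ := fun k => ‖a k‖ with hr
  have hrpos : ∀ k, 0 < r k := fun k => norm_pos_iff.mpr (hak' k)
  set S : ℝ := ∑ k : Fin n, (a k).arg with hS
  set τ : ℝ := S / n with hτ
  have hSn : (n : ℝ) * τ = S := by rw [hτ]; field_simp
  set α : Fin n → ℝ := fun k => k.val * τ - ∑ j ∈ Finset.range k.val, (a (j : Fin n)).arg with hα
  have hv1 : (1 : Fin n).val = 1 := by rw [← h1]
  have hsum_range : ∑ j ∈ Finset.range n, (a ((j : ℕ) : Fin n)).arg = S := by
    rw [hS, ← Fin.sum_univ_eq_sum_range (fun j => (a ((j : ℕ) : Fin n)).arg) n]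
    exact Finset.sum_congr rfl fun k _ => by rw [Fin.cast_val_eq_self]
  -- phase lemma
  have phase : ∀ k : Fin n, α (k + 1) - α k + (a k).arg = τ := by
    intro k
    have hvadd : (k + 1).val = (k.val + 1) % n := by rw [Fin.val_add, hv1]
    rcases Nat.lt_or_ge (k.val + 1) n with h | h
    · have hval : (k + 1).val = k.val + 1 := by rw [hvadd, Nat.mod_eq_of_lt h]
      simp only [hα, hval, Finset.sum_range_succ, Fin.cast_val_eq_self]
      push_cast
      ring
    · have hkn : k.val + 1 = n := by have := k.isLt; omega
      have hval : (k + 1).val = 0 := by rw [hvadd, hkn, Nat.mod_self]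
      have hsum : ∑ j ∈ Finset.range k.val, (a ((j : ℕ) : Fin n)).arg + (a k).arg = S := by
        nth_rewrite 2 [show k = ((k.val : ℕ) : Fin n) from (Fin.cast_val_eq_self k).symm]
        rw [← Finset.sum_range_succ, hkn, hsum_range]
      have hkv : (k.val : ℝ) = (n : ℝ) - 1 := by
        have : k.val = n - 1 := by omega
        rw [this]
        push_cast [Nat.cast_sub (by omega : 1 ≤ n)]
        ring
      simp only [hα, hval]
      simp only [Nat.cast_zero, Finset.range_zero, Finset.sum_empty]
      rw [hkv]
      linarith [hSn, hsum]
  -- phase-adjusted vectors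
  set ψ' : Fin n → EuclideanSpace ℂ (Fin d) :=
    fun k => Complex.exp (α k * Complex.I) • ψ k with hψ'
  have hψ'norm : ∀ k, ‖ψ' k‖ = 1 := by
    intro k
    rw [hψ', norm_smul, Complex.norm_exp_ofReal_mul_I, hψ k, one_mul]
  have hinnerψ' : ∀ s t : Fin n, (inner ℂ (ψ' s) (ψ' t) : ℂ)
      = Complex.exp ((α t - α s) * Complex.I) * (inner ℂ (ψ s) (ψ t) : ℂ) := by
    intro s t
    simp only [hψ', inner_smul_left, inner_smul_right]
    rw [← Complex.exp_conj]
    rw [map_mul, Complex.conj_I, Complex.conj_ofReal]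
    rw [← mul_assoc, ← Complex.exp_add]
    congr 2
    push_cast
    ring
  have hψ'cons : ∀ k : Fin n, (inner ℂ (ψ' k) (ψ' (k + 1)) : ℂ)
      = Complex.exp (τ * Complex.I) * (r k : ℂ) := by
    intro k
    rw [hinnerψ' k (k + 1)]
    have h2 : ((r k : ℝ) : ℂ) * Complex.exp ((a k).arg * Complex.I) = a k :=
      Complex.norm_mul_exp_arg_mul_I (a k)
    calc Complex.exp ((α (k + 1) - α k) * Complex.I) * (inner ℂ (ψ k) (ψ (k + 1)) : ℂ)
        = (r k : ℂ) * (Complex.exp ((α (k + 1) - α k) * Complex.I)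
            * Complex.exp ((a k).arg * Complex.I)) := by
              rw [show (inner ℂ (ψ k) (ψ (k + 1)) : ℂ)
                = (r k : ℂ) * Complex.exp ((a k).arg * Complex.I) from h2.symm]; ring
      _ = (r k : ℂ) * Complex.exp ((α (k + 1) - α k + (a k).arg) * Complex.I) := by
            rw [← Complex.exp_add]; push_cast; ring_nf
      _ = Complex.exp (τ * Complex.I) * (r k : ℂ) := by
            rw [← Complex.ofReal_sub, ← Complex.ofReal_add, phase k]; ring
  -- the circulant vectors
  set e := (finProdFinEquiv : Fin n × Fin d ≃ Fin (n * d)) with he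
  set φ : Fin n → EuclideanSpace ℂ (Fin (n * d)) :=
    fun k => WithLp.toLp 2 (fun m => ((Real.sqrt n : ℝ) : ℂ)⁻¹ *
      ψ' (k + (e.symm m).1) ((e.symm m).2)) with hφ
  have hsq : (((Real.sqrt n : ℝ) : ℂ))⁻¹ * (((Real.sqrt n : ℝ) : ℂ))⁻¹ = (n : ℂ)⁻¹ := by
    rw [← mul_inv]
    have : (((Real.sqrt n : ℝ) : ℂ)) * (((Real.sqrt n : ℝ) : ℂ)) = (n : ℂ) := by
      norm_cast
      exact Real.mul_self_sqrt (by positivity)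
    rw [this]
  have hinnerφ : ∀ p q : Fin n, (inner ℂ (φ p) (φ q) : ℂ)
      = (n : ℂ)⁻¹ * ∑ j : Fin n, (inner ℂ (ψ' (p + j)) (ψ' (q + j)) : ℂ) := by
    intro p q
    rw [PiLp.inner_apply]
    calc ∑ m : Fin (n * d), (inner ℂ (φ p m) (φ q m) : ℂ)
        = ∑ m : Fin (n * d), (n : ℂ)⁻¹ *
            ((starRingEnd ℂ) (ψ' (p + (e.symm m).1) ((e.symm m).2)) *
              ψ' (q + (e.symm m).1) ((e.symm m).2)) := by
          refine Finset.sum_congr rfl fun m _ => ?_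
          rw [RCLike.inner_apply, hφ]
          simp only [PiLp.toLp_apply, map_mul, map_inv₀, Complex.conj_ofReal]
          rw [← hsq]; ring
      _ = (n : ℂ)⁻¹ * ∑ x : Fin n × Fin d,
            ((starRingEnd ℂ) (ψ' (p + x.1) x.2) * ψ' (q + x.1) x.2) := by
          rw [← Finset.mul_sum]
          congr 1
          exact Equiv.sum_comp e.symm
            (fun x : Fin n × Fin d => (starRingEnd ℂ) (ψ' (p + x.1) x.2) * ψ' (q + x.1) x.2)
      _ = (n : ℂ)⁻¹ * ∑ j : Fin n, (inner ℂ (ψ' (p + j)) (ψ' (q + j)) : ℂ) := by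
          rw [Fintype.sum_prod_type]
          refine congrArg (fun t => (n : ℂ)⁻¹ * t) (Finset.sum_congr rfl fun j _ => ?_)
          rw [PiLp.inner_apply]
          exact Finset.sum_congr rfl fun i _ => by rw [RCLike.inner_apply, mul_comm]
  set z : Fin n → ℂ := fun m => (n : ℂ)⁻¹ * ∑ j : Fin n, (inner ℂ (ψ' j) (ψ' (j + m)) : ℂ)
    with hz
  have hcirc : ∀ p q : Fin n, (inner ℂ (φ p) (φ q) : ℂ) = z (q - p) := by
    intro p q
    rw [hinnerφ]
    simp only [hz]
    congr 1
    rw [← Equiv.sum_comp (Equiv.addLeft p)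
      (fun j => (inner ℂ (ψ' j) (ψ' (j + (q - p))) : ℂ))]
    refine Finset.sum_congr rfl fun j _ => ?_
    simp only [Equiv.coe_addLeft]
    congr 2
    abel
  have hφnorm : ∀ k, ‖φ k‖ = 1 := by
    intro k
    have h2 : (inner ℂ (φ k) (φ k) : ℂ) = 1 := by
      rw [hcirc k k, sub_self]
      simp only [hz]
      have hj : ∀ j : Fin n, (inner ℂ (ψ' j) (ψ' (j + 0)) : ℂ) = 1 := by
        intro j
        rw [add_zero, inner_self_eq_norm_sq_to_K, hψ'norm j]
        norm_num
      rw [Finset.sum_congr rfl fun j _ => hj j, Finset.sum_const, Finset.card_univ,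
        Fintype.card_fin, nsmul_eq_mul, mul_one,
        inv_mul_cancel₀ (by exact_mod_cast hnR : (n : ℂ) ≠ 0)]
    have h3 : ‖φ k‖ ^ 2 = 1 := by
      have h4 : (inner ℂ (φ k) (φ k) : ℂ) = ((‖φ k‖ : ℝ) : ℂ) ^ 2 :=
        inner_self_eq_norm_sq_to_K (φ k)
      rw [h2] at h4
      exact_mod_cast h4.symm
    nlinarith [norm_nonneg (φ k)]
  -- value of z 1
  set M : ℝ := (∑ k : Fin n, r k) / n with hM
  have hMpos : 0 < M := div_pos (Finset.sum_pos (fun i _ => hrpos i) univ_nonempty)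
    (by positivity)
  have hz1 : z 1 = Complex.exp (τ * Complex.I) * (M : ℂ) := by
    simp only [hz]
    rw [Finset.sum_congr rfl (fun j _ => hψ'cons j)]
    rw [← Finset.mul_sum, ← Complex.ofReal_sum]
    rw [hM]
    push_cast
    field_simp
  have hconsφ : ∀ k : Fin n, (inner ℂ (φ k) (φ (k + 1)) : ℂ)
      = Complex.exp (τ * Complex.I) * (M : ℂ) := by
    intro k
    rw [hcirc]
    have : k + 1 - k = 1 := by abel
    rw [this, hz1]
  have hΔφ : (∏ k : Fin n, (inner ℂ (φ k) (φ (k + 1)) : ℂ))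
      = Complex.exp (τ * Complex.I) ^ n * (M : ℂ) ^ n := by
    rw [Finset.prod_congr rfl (fun k _ => hconsφ k), Finset.prod_const,
      Finset.card_univ, Fintype.card_fin, mul_pow]
  have hΔψ : (∏ k : Fin n, a k)
      = Complex.exp (τ * Complex.I) ^ n * ((∏ k : Fin n, r k : ℝ) : ℂ) := by
    have step : ∀ k : Fin n, a k
        = Complex.exp ((a k).arg * Complex.I) * (r k : ℂ) := by
      intro k
      rw [mul_comm]
      exact (Complex.norm_mul_exp_arg_mul_I (a k)).symm
    rw [Finset.prod_congr rfl (fun k _ => step k), Finset.prod_mul_distrib]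
    congr 1
    · rw [← Complex.exp_sum, ← Complex.exp_nat_mul]
      congr 1
      rw [← Finset.sum_mul, ← Complex.ofReal_sum, ← hS]
      rw [show ((n : ℕ) : ℂ) * ((τ : ℝ) * Complex.I) = (((n : ℝ) * τ : ℝ) : ℂ) * Complex.I
        from by push_cast; ring]
      rw [hSn]
    · rw [← Complex.ofReal_prod]
  -- AM-GM
  have hprodpos : 0 < ∏ k : Fin n, r k := Finset.prod_pos fun i _ => hrpos i
  have hAM : (∏ k : Fin n, r k) ≤ M ^ n := by
    have hw : ∑ _i : Fin n, (n : ℝ)⁻¹ = 1 := by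
      rw [Finset.sum_const, Finset.card_univ, Fintype.card_fin, nsmul_eq_mul]
      field_simp
    have key := Real.geom_mean_le_arith_mean_weighted univ (fun _ => (n : ℝ)⁻¹) r
      (fun i _ => by positivity) hw (fun i _ => (hrpos i).le)
    have hL : (∏ i : Fin n, r i ^ ((n : ℝ)⁻¹)) = (∏ i : Fin n, r i) ^ ((n : ℝ)⁻¹) :=
      Real.finset_prod_rpow univ r (fun i _ => (hrpos i).le) _
    have hR : ∑ i : Fin n, (n : ℝ)⁻¹ * r i = M := by
      rw [← Finset.mul_sum, hM]
      ring
    rw [hL, hR] at key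
    calc (∏ k : Fin n, r k)
        = ((∏ k : Fin n, r k) ^ ((n : ℝ)⁻¹)) ^ (n : ℕ) := by
          rw [← Real.rpow_natCast ((∏ k : Fin n, r k) ^ ((n : ℝ)⁻¹)) n,
            ← Real.rpow_mul hprodpos.le, inv_mul_cancel₀ hnR, Real.rpow_one]
      _ ≤ M ^ n := pow_le_pow_left₀ (Real.rpow_nonneg hprodpos.le _) key n
  clear_value a r S τ α ψ' e φ z M
  refine ⟨n * d, by positivity, φ, hφnorm, ⟨z, fun i j => hcirc i j⟩, ?_, ?_⟩
  · intro k
    rw [hcirc k (k + 1), hcirc 0 1]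
    congr 1
    rw [add_sub_cancel_left, sub_zero]
  · refine ⟨(∏ k : Fin n, r k) / M ^ n, div_pos hprodpos (pow_pos hMpos n), ?_, ?_⟩
    · rw [div_le_one (pow_pos hMpos n)]
      exact hAM
    · rw [hΔψ, hΔφ]
      have hMne : ((M : ℝ) : ℂ) ^ n ≠ 0 := pow_ne_zero _ (by exact_mod_cast hMpos.ne')
      have hc : (((∏ k : Fin n, r k) / M ^ n : ℝ) : ℂ)
          = ((∏ k : Fin n, r k : ℝ) : ℂ) / ((M : ℝ) : ℂ) ^ n := by
        norm_cast
      rw [hc]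
      generalize Complex.exp ((τ : ℝ) * Complex.I) ^ n = E
      rw [show ((((∏ k : Fin n, r k : ℝ) : ℂ)) / ((M : ℝ) : ℂ) ^ n) * (E * ((M : ℝ) : ℂ) ^ n)
        = E * (((((∏ k : Fin n, r k : ℝ) : ℂ)) / ((M : ℝ) : ℂ) ^ n) * ((M : ℝ) : ℂ) ^ n)
        from by ring]
      rw [div_mul_cancel₀ _ hMne]
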